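/- Let 𝓜 be a linear map from symmetric m×m real matrices to ℝ^n that is (k+1, δ)-RIP with δ ∈ [0,1), for some positive integer k. Then for every symmetric m×m matrix B of rank at most k, the spectral norm satisfies ‖(𝓜*𝓜 − 𝓘)(B)‖ ≤ δ·‖B‖_F. -/

import Mathlib

open Matrix MeasureTheory ProbabilityTheory BigOperators

noncomputable section

/-- Frobenius norm of a real matrix. -/
def frob {m n : ℕ} (M : Matrix (Fin m) (Fin n) ℝ) : ℝ :=
  Real.sqrt (∑ i, ∑ j, (M i j) ^ 2)

/-- Euclidean norm of a vector in `ℝⁿ`. -/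
def vnorm {n : ℕ} (v : Fin n → ℝ) : ℝ :=
  Real.sqrt (∑ i, (v i) ^ 2)

/-- Spectral norm (operator 2-norm) of a real matrix. -/
def spec {m n : ℕ} (M : Matrix (Fin m) (Fin n) ℝ) : ℝ :=
  ‖LinearMap.toContinuousLinearMap (Matrix.toEuclideanLin M)‖

theorem isHermitian_tmul {m n : ℕ} (M : Matrix (Fin m) (Fin n) ℝ) :
    (Mᵀ * M).IsHermitian := by
  simpa [Matrix.conjTranspose_eq_transpose_of_trivial] using
    Matrix.isHermitian_conjTranspose_mul_self M

theorem posSemidef_tmul {m n : ℕ} (M : Matrix (Fin m) (Fin n) ℝ) :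
    (Mᵀ * M).PosSemidef := by
  simpa [Matrix.conjTranspose_eq_transpose_of_trivial] using
    Matrix.posSemidef_conjTranspose_mul_self M

/-- The `i`-th largest singular value (1-indexed) of a real matrix, i.e. the square root of the
`i`-th largest eigenvalue of `MᵀM`; junk value `0` when `i` is out of range. -/
def svalue {m n : ℕ} (M : Matrix (Fin m) (Fin n) ℝ) (i : ℕ) : ℝ :=
  if h : 1 ≤ i ∧ i ≤ n then
    Real.sqrt ((isHermitian_tmul M).eigenvalues
      (Tuple.sort (isHermitian_tmul M).eigenvalues ⟨n - i, by omega⟩))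
  else 0

/-- Membership in the Stiefel manifold `St(m,r)`. -/
def Stiefel {m r : ℕ} (X : Matrix (Fin m) (Fin r) ℝ) : Prop :=
  Xᵀ * X = 1

/-- The Loewner order on (symmetric) real matrices: `A ⪯ B`. -/
def loewnerLE {m : ℕ} (A B : Matrix (Fin m) (Fin m) ℝ) : Prop :=
  (B - A).PosSemidef

/-- The inverse of the positive semidefinite square root of a matrix (junk value `0` when the
matrix is not positive semidefinite). -/
def sqrtInv {r : ℕ} (S : Matrix (Fin r) (Fin r) ℝ) : Matrix (Fin r) (Fin r) ℝ :=
  haveI := Classical.propDecidable S.PosSemidef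
  if h : S.PosSemidef then
    (h.1.eigenvectorUnitary.1 * diagonal ((RCLike.ofReal : ℝ → ℝ) ∘ Real.sqrt ∘ h.1.eigenvalues) *
      (star h.1.eigenvectorUnitary : Matrix (Fin r) (Fin r) ℝ))⁻¹ else 0

/-- The linear sensing map `𝓜` determined by feature matrices `M_i`:
`𝓜(B)_i = Tr(M_iᵀ B)`. -/
def calM {m n : ℕ} (Ms : Fin n → Matrix (Fin m) (Fin m) ℝ)
    (B : Matrix (Fin m) (Fin m) ℝ) : Fin n → ℝ :=
  fun i => ((Ms i)ᵀ * B).trace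

/-- The adjoint `𝓜*` of the sensing map: `𝓜*(y) = ∑ i, y_i M_i`. -/
def calMadj {m n : ℕ} (Ms : Fin n → Matrix (Fin m) (Fin m) ℝ)
    (y : Fin n → ℝ) : Matrix (Fin m) (Fin m) ℝ :=
  ∑ i, y i • Ms i

/-- `(𝓜*𝓜 − 𝓘)(B)`. -/
def calE {m n : ℕ} (Ms : Fin n → Matrix (Fin m) (Fin m) ℝ)
    (B : Matrix (Fin m) (Fin m) ℝ) : Matrix (Fin m) (Fin m) ℝ :=
  calMadj Ms (calM Ms B) - B

/-- The `(s, δ)`-restricted isometry property for the sensing map determined by `Ms`. -/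
def IsRIP {m n : ℕ} (Ms : Fin n → Matrix (Fin m) (Fin m) ℝ) (s : ℕ) (δ : ℝ) : Prop :=
  ∀ B : Matrix (Fin m) (Fin m) ℝ, B.IsSymm → B.rank ≤ s →
    (1 - δ) * frob B ^ 2 ≤ vnorm (calM Ms B) ^ 2 ∧
      vnorm (calM Ms B) ^ 2 ≤ (1 + δ) * frob B ^ 2

/-- The Riemannian gradient on the Stiefel manifold obtained from the Euclidean gradient `g`
at the point `X`. -/
def Rgrad {m r : ℕ} (X g : Matrix (Fin m) (Fin r) ℝ) : Matrix (Fin m) (Fin r) ℝ :=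
  (1 - X * Xᵀ) * g + (2⁻¹ : ℝ) • (X * (Xᵀ * g - gᵀ * X))

/-- One step of Riemannian gradient descent (with `μ = 2`) for the weight-normalized
matrix sensing problem. -/
def RGDstep {m r n : ℕ} (Ms : Fin n → Matrix (Fin m) (Fin m) ℝ)
    (A : Matrix (Fin m) (Fin m) ℝ) (η : ℝ)
    (p : Matrix (Fin m) (Fin r) ℝ × Matrix (Fin r) (Fin r) ℝ) :
    Matrix (Fin m) (Fin r) ℝ × Matrix (Fin r) (Fin r) ℝ :=
  let X := p.1
  let Θ := p.2
  let Gt := calMadj Ms (calM Ms (X * Θ * Xᵀ - A)) * X * Θ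
  let G := Rgrad X Gt
  let X' := (X - η • G) * sqrtInv (1 + η ^ 2 • (Gᵀ * G))
  let Θ' := X'ᵀ * A * X' - X'ᵀ * calE Ms (X' * Θ * X'ᵀ - A) * X'
  (X', Θ')

/-- The standard Gaussian ensemble on `m × r` real matrices (i.i.d. `N(0,1)` entries). -/
def gaussianEnsemble (m r : ℕ) : Measure (Fin m → Fin r → ℝ) :=
  Measure.pi fun _ : Fin m => Measure.pi fun _ : Fin r => gaussianReal 0 1

end


noncomputable section

open scoped RealInnerProductSpace

theorem aux_opNorm_le {E : Type*} [NormedAddCommGroup E] [InnerProductSpace ℝ E]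
    (T : E →L[ℝ] E) (hsym : ∀ x y : E, ⟪T x, y⟫ = ⟪x, T y⟫)
    {c : ℝ} (hc : 0 ≤ c) (h : ∀ x : E, |⟪T x, x⟫| ≤ c * ‖x‖ ^ 2) : ‖T‖ ≤ c := by
  have key : ∀ x y : E, ⟪T x, y⟫ ≤ c / 2 * (‖x‖ ^ 2 + ‖y‖ ^ 2) := by
    intro x y
    have h1 : ⟪T y, x⟫ = ⟪T x, y⟫ := by rw [hsym y x, real_inner_comm]
    have h4 : (4 : ℝ) * ⟪T x, y⟫ = ⟪T (x + y), x + y⟫ - ⟪T (x - y), x - y⟫ := by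
      simp only [map_add, map_sub, inner_add_left, inner_add_right, inner_sub_left,
        inner_sub_right, h1]
      ring
    have e1 : ‖x + y‖ ^ 2 = ‖x‖ ^ 2 + 2 * ⟪x, y⟫ + ‖y‖ ^ 2 := by
      rw [@norm_add_sq_real]
    have e2 : ‖x - y‖ ^ 2 = ‖x‖ ^ 2 - 2 * ⟪x, y⟫ + ‖y‖ ^ 2 := by
      rw [@norm_sub_sq_real]
    have b1 := (abs_le.mp (h (x + y))).2
    have b2 := (abs_le.mp (h (x - y))).1
    rw [e1] at b1
    rw [e2] at b2
    nlinarith [b1, b2, h4]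
  refine T.opNorm_le_bound hc fun x => ?_
  by_cases hTx : T x = 0
  · rw [hTx, norm_zero]
    positivity
  · have hTxn : 0 < ‖T x‖ := norm_pos_iff.mpr hTx
    have hx : x ≠ 0 := by rintro rfl; simp at hTx
    have hxn : 0 < ‖x‖ := norm_pos_iff.mpr hx
    set y := (‖x‖ / ‖T x‖) • T x with hy
    have hyn : ‖y‖ = ‖x‖ := by
      rw [hy, norm_smul, Real.norm_eq_abs, abs_div, abs_of_nonneg (norm_nonneg x),
        abs_of_nonneg (norm_nonneg (T x))]
      field_simp
    have hin : ⟪T x, y⟫ = ‖x‖ * ‖T x‖ := by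
      rw [hy, real_inner_smul_right, real_inner_self_eq_norm_sq]
      field_simp
    have := key x y
    rw [hin, hyn] at this
    nlinarith

open Module in
theorem aux_rank_add_le {m : ℕ} (A B : Matrix (Fin m) (Fin m) ℝ) :
    (A + B).rank ≤ A.rank + B.rank := by
  have h : LinearMap.range (A + B).mulVecLin ≤
      LinearMap.range A.mulVecLin ⊔ LinearMap.range B.mulVecLin := by
    rintro _ ⟨x, rfl⟩
    rw [Matrix.mulVecLin_add]
    exact Submodule.add_mem_sup ⟨x, rfl⟩ ⟨x, rfl⟩
  calc (A + B).rank ≤ finrank ℝ ↥(LinearMap.range A.mulVecLin ⊔ LinearMap.range B.mulVecLin) :=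
        Submodule.finrank_mono h
    _ ≤ A.rank + B.rank := Submodule.finrank_add_le_finrank_add_finrank _ _

theorem aux_rank_smul_le {m : ℕ} (t : ℝ) (C : Matrix (Fin m) (Fin m) ℝ) :
    (t • C).rank ≤ C.rank := by
  rw [Matrix.smul_eq_diagonal_mul]
  exact Matrix.rank_mul_le_right _ _

theorem aux_rank_vecMulVec_le {m : ℕ} (v w : Fin m → ℝ) :
    (Matrix.vecMulVec v w).rank ≤ 1 := by
  rw [Matrix.vecMulVec_eq Unit]
  exact (Matrix.rank_mul_le_left _ _).trans ((Matrix.rank_le_card_width _).trans (by simp))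

theorem aux_frob_sq {m : ℕ} (D : Matrix (Fin m) (Fin m) ℝ) :
    frob D ^ 2 = ∑ p : Fin m × Fin m, D p.1 p.2 ^ 2 := by
  rw [frob, Real.sq_sqrt (by positivity), Fintype.sum_prod_type]

theorem aux_vnorm_sq {n : ℕ} (y : Fin n → ℝ) : vnorm y ^ 2 = ∑ i, y i ^ 2 := by
  rw [vnorm, Real.sq_sqrt (by positivity)]

theorem aux_frob_nonneg {m n : ℕ} (M : Matrix (Fin m) (Fin n) ℝ) : 0 ≤ frob M :=
  Real.sqrt_nonneg _

theorem aux_frob_pos {m : ℕ} {M : Matrix (Fin m) (Fin m) ℝ} (h : M ≠ 0) : 0 < frob M := by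
  have hpos : 0 < ∑ i, ∑ j, M i j ^ 2 := by
    obtain ⟨i, j, hij⟩ : ∃ i j, M i j ≠ 0 := by
      by_contra hc
      push_neg at hc
      exact h (by ext i j; exact hc i j)
    refine Finset.sum_pos' (fun _ _ => Finset.sum_nonneg fun _ _ => sq_nonneg _)
      ⟨i, Finset.mem_univ i, Finset.sum_pos' (fun _ _ => sq_nonneg _)
        ⟨j, Finset.mem_univ j, by positivity⟩⟩
  exact Real.sqrt_pos.mpr hpos

theorem aux_polar_sum {ι : Type*} [Fintype ι] (f g : ι → ℝ) (t : ℝ) :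
    (∑ i, (f i + t * g i) ^ 2) - ∑ i, (f i - t * g i) ^ 2 = 4 * t * ∑ i, f i * g i := by
  rw [← Finset.sum_sub_distrib, Finset.mul_sum]
  exact Finset.sum_congr rfl fun i _ => by ring

theorem aux_para_sum {ι : Type*} [Fintype ι] (f g : ι → ℝ) (t : ℝ) :
    (∑ i, (f i + t * g i) ^ 2) + ∑ i, (f i - t * g i) ^ 2
      = 2 * (∑ i, f i ^ 2) + 2 * t ^ 2 * ∑ i, g i ^ 2 := by
  rw [← Finset.sum_add_distrib, Finset.mul_sum, Finset.mul_sum, ← Finset.sum_add_distrib]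
  exact Finset.sum_congr rfl fun i _ => by ring

theorem aux_calM_add_smul {m n : ℕ} (Ms : Fin n → Matrix (Fin m) (Fin m) ℝ)
    (B C : Matrix (Fin m) (Fin m) ℝ) (t : ℝ) (l : Fin n) :
    calM Ms (B + t • C) l = calM Ms B l + t * calM Ms C l := by
  simp [calM, Matrix.mul_add, Matrix.mul_smul, Matrix.trace_add, Matrix.trace_smul,
    smul_eq_mul]

theorem aux_calM_sub_smul {m n : ℕ} (Ms : Fin n → Matrix (Fin m) (Fin m) ℝ)
    (B C : Matrix (Fin m) (Fin m) ℝ) (t : ℝ) (l : Fin n) :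
    calM Ms (B - t • C) l = calM Ms B l - t * calM Ms C l := by
  simp [calM, Matrix.mul_sub, Matrix.mul_smul, Matrix.trace_sub, Matrix.trace_smul,
    smul_eq_mul]

theorem aux_flat {m : ℕ} (h : Fin m → Fin m → ℝ) :
    ∑ p : Fin m × Fin m, h p.1 p.2 = ∑ i, ∑ j, h i j :=
  Fintype.sum_prod_type _

theorem aux_key {m n k : ℕ} (Ms : Fin n → Matrix (Fin m) (Fin m) ℝ)
    {δ : ℝ} (hδ0 : 0 ≤ δ) (hRIP : IsRIP Ms (k + 1) δ)
    (B : Matrix (Fin m) (Fin m) ℝ) (hBsym : B.IsSymm) (hBr : B.rank ≤ k) (hB0 : B ≠ 0)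
    (C : Matrix (Fin m) (Fin m) ℝ) (hCsym : C.IsSymm) (hCr : C.rank ≤ 1) (hC0 : C ≠ 0) :
    |(∑ l, calM Ms B l * calM Ms C l) - ∑ p : Fin m × Fin m, B p.1 p.2 * C p.1 p.2|
      ≤ δ * frob B * frob C := by
  have hfB : 0 < frob B := aux_frob_pos hB0
  have hfC : 0 < frob C := aux_frob_pos hC0
  set t : ℝ := frob B / frob C with ht
  have htpos : 0 < t := div_pos hfB hfC
  have hsymadd : (B + t • C).IsSymm := by
    unfold Matrix.IsSymm at *
    rw [Matrix.transpose_add, Matrix.transpose_smul, hBsym, hCsym]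
  have hsymsub : (B - t • C).IsSymm := by
    unfold Matrix.IsSymm at *
    rw [Matrix.transpose_sub, Matrix.transpose_smul, hBsym, hCsym]
  have hrkadd : (B + t • C).rank ≤ k + 1 :=
    (aux_rank_add_le _ _).trans (add_le_add hBr ((aux_rank_smul_le _ _).trans hCr))
  have hrksub : (B - t • C).rank ≤ k + 1 := by
    rw [sub_eq_add_neg, ← neg_smul]
    exact (aux_rank_add_le _ _).trans (add_le_add hBr ((aux_rank_smul_le _ _).trans hCr))
  have hdev : ∀ D : Matrix (Fin m) (Fin m) ℝ, D.IsSymm → D.rank ≤ k + 1 →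
      |vnorm (calM Ms D) ^ 2 - frob D ^ 2| ≤ δ * frob D ^ 2 := by
    intro D h1 h2
    obtain ⟨hl, hr⟩ := hRIP D h1 h2
    rw [abs_le]
    constructor <;> nlinarith
  have hPlus := hdev _ hsymadd hrkadd
  have hMinus := hdev _ hsymsub hrksub
  have hvadd : vnorm (calM Ms (B + t • C)) ^ 2
      = ∑ l, (calM Ms B l + t * calM Ms C l) ^ 2 := by
    rw [aux_vnorm_sq]
    exact Finset.sum_congr rfl fun l _ => by rw [aux_calM_add_smul]
  have hvsub : vnorm (calM Ms (B - t • C)) ^ 2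
      = ∑ l, (calM Ms B l - t * calM Ms C l) ^ 2 := by
    rw [aux_vnorm_sq]
    exact Finset.sum_congr rfl fun l _ => by rw [aux_calM_sub_smul]
  have hfadd : frob (B + t • C) ^ 2
      = ∑ p : Fin m × Fin m, (B p.1 p.2 + t * C p.1 p.2) ^ 2 := by
    rw [aux_frob_sq]
    exact Finset.sum_congr rfl fun p _ => by simp [smul_eq_mul]
  have hfsub : frob (B - t • C) ^ 2
      = ∑ p : Fin m × Fin m, (B p.1 p.2 - t * C p.1 p.2) ^ 2 := by
    rw [aux_frob_sq]
    exact Finset.sum_congr rfl fun p _ => by simp [smul_eq_mul]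
  rw [hvadd, hfadd] at hPlus
  rw [hvsub, hfsub] at hMinus
  set a : Fin n → ℝ := calM Ms B
  set c : Fin n → ℝ := calM Ms C
  set Bf : Fin m × Fin m → ℝ := fun p => B p.1 p.2
  set Cf : Fin m × Fin m → ℝ := fun p => C p.1 p.2
  have p1 := aux_polar_sum a c t
  have p2 := aux_polar_sum Bf Cf t
  have q2 := aux_para_sum Bf Cf t
  have hBB : ∑ p, Bf p ^ 2 = frob B ^ 2 := (aux_frob_sq B).symm
  have hCC : ∑ p, Cf p ^ 2 = frob C ^ 2 := (aux_frob_sq C).symm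
  have htc : t ^ 2 * frob C ^ 2 = frob B ^ 2 := by
    rw [ht]
    field_simp
  set E : ℝ := (∑ l, a l * c l) - ∑ p, Bf p * Cf p with hE
  have h4t : 4 * t * E = ((∑ l, (a l + t * c l) ^ 2) - ∑ p, (Bf p + t * Cf p) ^ 2)
      - ((∑ l, (a l - t * c l) ^ 2) - ∑ p, (Bf p - t * Cf p) ^ 2) := by
    rw [hE]
    linarith [p1, p2]
  have hbound : |4 * t * E| ≤ 4 * δ * frob B ^ 2 := by
    rw [h4t]
    calc _ ≤ |(∑ l, (a l + t * c l) ^ 2) - ∑ p, (Bf p + t * Cf p) ^ 2|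
        + |(∑ l, (a l - t * c l) ^ 2) - ∑ p, (Bf p - t * Cf p) ^ 2| := abs_sub _ _
      _ ≤ δ * (∑ p, (Bf p + t * Cf p) ^ 2) + δ * (∑ p, (Bf p - t * Cf p) ^ 2) :=
        add_le_add hPlus hMinus
      _ = δ * ((∑ p, (Bf p + t * Cf p) ^ 2) + ∑ p, (Bf p - t * Cf p) ^ 2) := by ring
      _ = 4 * δ * frob B ^ 2 := by rw [q2, hBB, hCC]; linear_combination 2 * δ * htc
  have habsE : 4 * t * |E| ≤ 4 * δ * frob B ^ 2 := by
    rwa [abs_mul, abs_of_pos (by positivity : (0:ℝ) < 4 * t)] at hbound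
  have hgoal : 4 * t * (δ * frob B * frob C) = 4 * δ * frob B ^ 2 := by
    rw [ht]
    field_simp
  have hfin : 4 * t * |E| ≤ 4 * t * (δ * frob B * frob C) := by rw [hgoal]; exact habsE
  exact le_of_mul_le_mul_left hfin (by positivity)

end

noncomputable section

theorem stmt13 {m n k : ℕ} (hk : 1 ≤ k)
    (Ms : Fin n → Matrix (Fin m) (Fin m) ℝ) (hMs : ∀ i, (Ms i).IsSymm)
    (δ : ℝ) (hδ0 : 0 ≤ δ) (hδ1 : δ < 1) (hRIP : IsRIP Ms (k + 1) δ)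
    (B : Matrix (Fin m) (Fin m) ℝ) (hBsym : B.IsSymm) (hBr : B.rank ≤ k) :
    spec (calE Ms B) ≤ δ * frob B := by
  by_cases hB0 : B = 0
  · subst hB0
    have h1 : calE Ms (0 : Matrix (Fin m) (Fin m) ℝ) = 0 := by
      simp [calE, calM, calMadj]
    rw [h1]
    have h2 : spec (0 : Matrix (Fin m) (Fin m) ℝ) = 0 := by
      simp only [spec, map_zero, norm_zero]
    rw [h2]
    have h3 : frob (0 : Matrix (Fin m) (Fin m) ℝ) = 0 := by
      simp [frob]
    rw [h3, mul_zero]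
  · -- main case
    have hAsym : (calE Ms B).IsSymm := by
      unfold Matrix.IsSymm
      simp only [calE, calMadj, Matrix.transpose_sub, Matrix.transpose_sum,
        Matrix.transpose_smul]
      rw [hBsym.eq]
      congr 1
      exact Finset.sum_congr rfl fun i _ => by rw [(hMs i).eq]
    have hherm : (calE Ms B).IsHermitian := by
      unfold Matrix.IsHermitian
      rw [Matrix.conjTranspose_eq_transpose_of_trivial]
      exact hAsym.eq
    have hsymop := Matrix.isHermitian_iff_isSymmetric.mp hherm
    show ‖LinearMap.toContinuousLinearMap (Matrix.toEuclideanLin (calE Ms B))‖ ≤ δ * frob B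
    set T := LinearMap.toContinuousLinearMap (Matrix.toEuclideanLin (calE Ms B)) with hT
    refine aux_opNorm_le T (fun x y => hsymop x y)
      (mul_nonneg hδ0 (aux_frob_nonneg B)) fun x => ?_
    set v : Fin m → ℝ := fun i => x i with hv
    set C : Matrix (Fin m) (Fin m) ℝ := Matrix.vecMulVec v v with hC
    have hCsym : C.IsSymm := by
      unfold Matrix.IsSymm
      ext i j
      simp [hC, Matrix.vecMulVec_apply, mul_comm]
    have hnx : ‖x‖ ^ 2 = ∑ i, v i ^ 2 := by
      rw [EuclideanSpace.norm_eq, Real.sq_sqrt (by positivity)]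
      exact Finset.sum_congr rfl fun i _ => by rw [Real.norm_eq_abs, sq_abs]
    have hip : (inner ℝ (T x) x : ℝ)
        = (∑ l, calM Ms B l * calM Ms C l)
          - ∑ p : Fin m × Fin m, B p.1 p.2 * C p.1 p.2 := by
      have step1 : (inner ℝ (T x) x : ℝ)
          = ∑ p : Fin m × Fin m, (calE Ms B) p.1 p.2 * (v p.1 * v p.2) := by
        rw [aux_flat (fun i j => calE Ms B i j * (v i * v j))]
        have : (inner ℝ (T x) x : ℝ) = ∑ i, (calE Ms B *ᵥ v) i * v i := by
          simp [hT, PiLp.inner_apply, RCLike.inner_apply, conj_trivial,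
            Matrix.toEuclideanLin_apply]
          exact Finset.sum_congr rfl fun i _ => mul_comm _ _
        rw [this]
        refine Finset.sum_congr rfl fun i _ => ?_
        simp only [Matrix.mulVec, dotProduct]
        rw [Finset.sum_mul]
        exact Finset.sum_congr rfl fun j _ => by ring
      rw [step1]
      have hentry : ∀ p : Fin m × Fin m,
          (calE Ms B) p.1 p.2 = (∑ l, calM Ms B l * Ms l p.1 p.2) - B p.1 p.2 := by
        intro p
        simp [calE, calMadj, Matrix.sub_apply, Matrix.sum_apply, Matrix.smul_apply,
          smul_eq_mul]
      have hcalMC : ∀ l, calM Ms C l = ∑ p : Fin m × Fin m, Ms l p.1 p.2 * (v p.1 * v p.2) := by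
        intro l
        rw [calM]
        have : ((Ms l)ᵀ * C).trace = ∑ i, ∑ j, Ms l i j * C i j := by
          simp only [Matrix.trace, Matrix.diag, Matrix.mul_apply, Matrix.transpose_apply]
          rw [Finset.sum_comm]
        rw [this, aux_flat (fun i j => Ms l i j * (v i * v j))]
        exact Finset.sum_congr rfl fun i _ => Finset.sum_congr rfl fun j _ => by
          rw [hC, Matrix.vecMulVec_apply]
      calc ∑ p : Fin m × Fin m, (calE Ms B) p.1 p.2 * (v p.1 * v p.2)
          = ∑ p : Fin m × Fin m, ((∑ l, calM Ms B l * Ms l p.1 p.2) * (v p.1 * v p.2)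
              - B p.1 p.2 * (v p.1 * v p.2)) := by
            refine Finset.sum_congr rfl fun p _ => by rw [hentry p]; ring
        _ = (∑ p : Fin m × Fin m, ∑ l, calM Ms B l * (Ms l p.1 p.2 * (v p.1 * v p.2)))
              - ∑ p : Fin m × Fin m, B p.1 p.2 * (v p.1 * v p.2) := by
            rw [Finset.sum_sub_distrib]
            congr 1
            refine Finset.sum_congr rfl fun p _ => ?_
            rw [Finset.sum_mul]
            exact Finset.sum_congr rfl fun l _ => by ring
        _ = (∑ l, calM Ms B l * calM Ms C l)
              - ∑ p : Fin m × Fin m, B p.1 p.2 * C p.1 p.2 := by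
            have e1 : ∑ p : Fin m × Fin m, ∑ l, calM Ms B l * (Ms l p.1 p.2 * (v p.1 * v p.2))
                = ∑ l, calM Ms B l * calM Ms C l := by
              rw [Finset.sum_comm]
              refine Finset.sum_congr rfl fun l _ => ?_
              rw [hcalMC l, Finset.mul_sum]
            have e2 : ∑ p : Fin m × Fin m, B p.1 p.2 * (v p.1 * v p.2)
                = ∑ p : Fin m × Fin m, B p.1 p.2 * C p.1 p.2 := by
              refine Finset.sum_congr rfl fun p _ => ?_
              rw [hC, Matrix.vecMulVec_apply]
            rw [e1, e2]
    by_cases hC0 : C = 0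
    · rw [hip, hC0]
      simp only [calM, Matrix.mul_zero, Matrix.trace_zero, mul_zero, Finset.sum_const_zero,
        Matrix.zero_apply, sub_zero, abs_zero]
      exact mul_nonneg (mul_nonneg hδ0 (aux_frob_nonneg B)) (sq_nonneg _)
    · have hfrobC : frob C = ‖x‖ ^ 2 := by
        rw [frob]
        have hsum : ∑ i, ∑ j, C i j ^ 2 = (∑ i, v i ^ 2) * ∑ j, v j ^ 2 := by
          rw [Finset.sum_mul]
          refine Finset.sum_congr rfl fun i _ => ?_
          rw [Finset.mul_sum]
          refine Finset.sum_congr rfl fun j _ => ?_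
          rw [hC, Matrix.vecMulVec_apply]
          ring
        rw [hsum, ← sq, Real.sqrt_sq (by positivity), hnx]
      have hbd := aux_key Ms hδ0 hRIP B hBsym hBr hB0 C hCsym
        ((aux_rank_vecMulVec_le v v)) hC0
      rw [hip]
      calc |(∑ l, calM Ms B l * calM Ms C l)
            - ∑ p : Fin m × Fin m, B p.1 p.2 * C p.1 p.2|
          ≤ δ * frob B * frob C := hbd
        _ = δ * frob B * ‖x‖ ^ 2 := by rw [hfrobC]

end
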